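/- At the typical ribosomal error probability r = 10⁻⁴, the channel capacity of the ribosome channel satisfies 4.216 < C(10⁻⁴) ≤ log₂ 21 < 4.3924 bits per use; equivalently, dividing by the 6 bits needed to specify a codon, 0.7027 < C(10⁻⁴)/6 < 0.7321 codons per use. -/

import Mathlib

open Finset

/-- The ribosome channel: probability of output `y` given input codon `x`,
with error probability `r` and genetic code `G`. -/
noncomputable def rib (G : Fin 64 → Fin 21) (r : ℝ) (y : Fin 21) (x : Fin 64) : ℝ :=
  if y = G x then 1 - r else r / 20

/-- Mutual information (in bits) of the ribosome channel at input distribution `q`.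
Note `Real.logb 2 0 = 0`, which realizes the convention `0 · log₂ 0 = 0`. -/
noncomputable def mutualInfo (G : Fin 64 → Fin 21) (r : ℝ) (q : Fin 64 → ℝ) : ℝ :=
  ∑ x : Fin 64, ∑ y : Fin 21,
    q x * rib G r y x *
      Real.logb 2 (rib G r y x / ∑ x' : Fin 64, q x' * rib G r y x')

/-- `q` is a probability distribution on the 64 codons. -/
def IsDist (q : Fin 64 → ℝ) : Prop := (∀ x, 0 ≤ q x) ∧ ∑ x : Fin 64, q x = 1

/-- The channel capacity: supremum of the mutual information over all input distributions. -/
noncomputable def capacity (G : Fin 64 → Fin 21) (r : ℝ) : ℝ :=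
  sSup {c : ℝ | ∃ q : Fin 64 → ℝ, IsDist q ∧ c = mutualInfo G r q}

/-- `G` has the fiber sizes of the standard genetic code: exactly 2 outputs have a
fiber of size 1, 9 of size 2, 2 of size 3, 5 of size 4, and 3 of size 6. -/
def FiberCode (G : Fin 64 → Fin 21) : Prop :=
  ((univ.filter fun y : Fin 21 => (univ.filter fun x : Fin 64 => G x = y).card = 1).card = 2) ∧
  ((univ.filter fun y : Fin 21 => (univ.filter fun x : Fin 64 => G x = y).card = 2).card = 9) ∧
  ((univ.filter fun y : Fin 21 => (univ.filter fun x : Fin 64 => G x = y).card = 3).card = 2) ∧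
  ((univ.filter fun y : Fin 21 => (univ.filter fun x : Fin 64 => G x = y).card = 4).card = 5) ∧
  ((univ.filter fun y : Fin 21 => (univ.filter fun x : Fin 64 => G x = y).card = 6).card = 3)

/-- The lower-bound function `g` of Theorem II.1 (base-2 logarithms; since
`Real.logb 2 0 = 0`, terms of the form `0 · log₂ 0` vanish as intended). -/
noncomputable def g (r : ℝ) : ℝ :=
  (1/64) * (2*(1-r) * Real.logb 2 (1280*(1-r)/(43*r+20))
    + (63*r/10) * Real.logb 2 (64*r/(43*r+20))
    + 18*(1-r) * Real.logb 2 (640*(1-r)/(11*r+20))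
    + (279*r/10) * Real.logb 2 (32*r/(11*r+20))
    + 6*(1-r) * Real.logb 2 (1280*(1-r)/(r+60))
    + (61*r/10) * Real.logb 2 (64*r/(r+60))
    + 20*(1-r) * Real.logb 2 (64*(1-r)/(4-r))
    + 15*r * Real.logb 2 (16*r/(5*(4-r)))
    + 18*(1-r) * Real.logb 2 (640*(1-r)/(60-31*r))
    + (87*r/10) * Real.logb 2 (32*r/(60-31*r)))


section Helpers

open Real

lemma logb_lb (a b : ℝ) (p q : ℕ) (hb : 0 < b) (hq : 0 < q)
    (h : 2 ^ p * b ^ q < a ^ q) : (p : ℝ) / q < Real.logb 2 (a / b) := by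
  have hab : (2:ℝ) ^ p < (a / b) ^ q := by
    rw [div_pow, lt_div_iff₀ (by positivity)]; linarith
  have := Real.logb_lt_logb (b := 2) one_lt_two (by positivity) hab
  rw [Real.logb_pow, Real.logb_pow, Real.logb_self_eq_one (by norm_num)] at this
  rw [div_lt_iff₀ (by exact_mod_cast hq)]
  nlinarith [this]

lemma logb_lb_neg (a b : ℝ) (p q : ℕ) (ha : 0 < a) (hb : 0 < b) (hq : 0 < q)
    (h : b ^ q < 2 ^ p * a ^ q) : -(p : ℝ) / q < Real.logb 2 (a / b) := by
  have hab : ((2:ℝ) ^ p)⁻¹ < (a / b) ^ q := by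
    rw [div_pow, inv_eq_one_div, div_lt_div_iff₀ (by positivity) (by positivity), one_mul]
    linear_combination h
  have := Real.logb_lt_logb (b := 2) one_lt_two (by positivity) hab
  rw [Real.logb_inv, Real.logb_pow, Real.logb_pow,
    Real.logb_self_eq_one (by norm_num)] at this
  rw [div_lt_iff₀ (by exact_mod_cast hq)]
  nlinarith [this]

lemma logb_ub (a : ℝ) (p q : ℕ) (ha : 0 < a) (hq : 0 < q)
    (h : a ^ q < 2 ^ p) : Real.logb 2 a < (p : ℝ) / q := by
  have := Real.logb_lt_logb (b := 2) one_lt_two (by positivity) h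
  rw [Real.logb_pow, Real.logb_pow, Real.logb_self_eq_one (by norm_num)] at this
  rw [lt_div_iff₀ (by exact_mod_cast hq)]
  nlinarith [this]

lemma sum_ite_card {α : Type*} [Fintype α] (P : α → Prop) [DecidablePred P] (u v : ℝ) :
    ∑ x : α, (if P x then u else v) =
      ((univ.filter P).card : ℝ) * u + ((Fintype.card α : ℝ) - (univ.filter P).card) * v := by
  rw [Finset.sum_ite, Finset.sum_const, Finset.sum_const]
  have h := Finset.card_filter_add_card_filter_not (s := (univ : Finset α)) P
  rw [Finset.card_univ] at h
  have h2 : ((univ.filter fun x => ¬ P x).card : ℝ)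
      = (Fintype.card α : ℝ) - (univ.filter P).card := by
    push_cast [← h]; ring
  rw [nsmul_eq_mul, nsmul_eq_mul, h2]

/-- fiber size of `y` -/
def nn (G : Fin 64 → Fin 21) (y : Fin 21) : ℕ := (univ.filter fun x : Fin 64 => G x = y).card

/-- the contribution of an output with fiber size `k` to the mutual information of the
uniform input distribution, at `r = 1/10000` -/
noncomputable def Phi (k : ℕ) : ℝ :=
  (k : ℝ) * ((1:ℝ)/64 * (1 - 1/10000)) *
      Real.logb 2 ((1 - 1/10000) /
        ((1/64) * ((k:ℝ) * (1 - 1/10000) + (64 - (k:ℝ)) * (1/10000/20))))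
    + (64 - (k : ℝ)) * ((1:ℝ)/64 * (1/10000/20)) *
      Real.logb 2 ((1/10000/20) /
        ((1/64) * ((k:ℝ) * (1 - 1/10000) + (64 - (k:ℝ)) * (1/10000/20))))

lemma filter_comm_eq (G : Fin 64 → Fin 21) (y : Fin 21) :
    (univ.filter fun x : Fin 64 => y = G x) = (univ.filter fun x : Fin 64 => G x = y) :=
  Finset.ext fun x => by simp [eq_comm]

lemma hden (G : Fin 64 → Fin 21) (y : Fin 21) :
    (∑ x' : Fin 64, (1:ℝ)/64 * rib G (1/10000) y x')
      = (1/64) * ((nn G y : ℝ) * (1 - 1/10000) + (64 - (nn G y : ℝ)) * (1/10000/20)) := by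
  have : ∀ x' : Fin 64, (1:ℝ)/64 * rib G (1/10000) y x'
      = if y = G x' then (1:ℝ)/64 * (1 - 1/10000) else (1:ℝ)/64 * (1/10000/20) := by
    intro x'; unfold rib; split_ifs <;> ring
  rw [Finset.sum_congr rfl fun x' _ => this x', sum_ite_card, filter_comm_eq]
  simp only [Fintype.card_fin, nn]
  ring

lemma hrow (G : Fin 64 → Fin 21) (y : Fin 21) :
    (∑ x : Fin 64, (1:ℝ)/64 * rib G (1/10000) y x *
        Real.logb 2 (rib G (1/10000) y x / ∑ x' : Fin 64, (1:ℝ)/64 * rib G (1/10000) y x'))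
      = Phi (nn G y) := by
  unfold Phi
  rw [hden G y]
  simp only [nn]
  set c : ℝ := ((univ.filter fun x : Fin 64 => G x = y).card : ℝ) with hc
  set D : ℝ := (1/64) * (c * (1 - 1/10000) + (64 - c) * (1/10000/20)) with hD
  have key : ∀ x : Fin 64, (1:ℝ)/64 * rib G (1/10000) y x *
        Real.logb 2 (rib G (1/10000) y x / D)
      = if y = G x then (1:ℝ)/64 * (1 - 1/10000) * Real.logb 2 ((1 - 1/10000) / D)
        else (1:ℝ)/64 * (1/10000/20) * Real.logb 2 ((1/10000/20) / D) := by
    intro x; unfold rib; split_ifs <;> ring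
  rw [Finset.sum_congr rfl fun x _ => key x, sum_ite_card, filter_comm_eq]
  simp only [Fintype.card_fin, ← hc]
  ring

lemma uniform_eval (G : Fin 64 → Fin 21) (hG : FiberCode G) :
    mutualInfo G (1/10000) (fun _ => 1/64)
      = 2 * Phi 1 + 9 * Phi 2 + 2 * Phi 3 + 5 * Phi 4 + 3 * Phi 6 := by
  unfold mutualInfo
  rw [Finset.sum_comm]
  have step : (∑ y : Fin 21, ∑ x : Fin 64, (fun _ : Fin 64 => (1:ℝ)/64) x * rib G (1/10000) y x *
      Real.logb 2 (rib G (1/10000) y x / ∑ x' : Fin 64, (fun _ : Fin 64 => (1:ℝ)/64) x' * rib G (1/10000) y x'))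
      = ∑ y : Fin 21, Phi (nn G y) :=
    Finset.sum_congr rfl fun y _ => hrow G y
  rw [step]
  -- partition over fiber sizes
  set s : ℕ → Finset (Fin 21) := fun k => univ.filter fun y => nn G y = k with hs
  obtain ⟨h1, h2, h3, h4, h6⟩ := hG
  have c1 : (s 1).card = 2 := h1
  have c2 : (s 2).card = 9 := h2
  have c3 : (s 3).card = 2 := h3
  have c4 : (s 4).card = 5 := h4
  have c6 : (s 6).card = 3 := h6
  have hdisj : ∀ j k : ℕ, j ≠ k → Disjoint (s j) (s k) := by
    intro j k hjk
    rw [Finset.disjoint_left]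
    intro y hyj hyk
    exact hjk ((Finset.mem_filter.mp hyj).2 ▸ (Finset.mem_filter.mp hyk).2 ▸ rfl)
  have d12 : Disjoint (s 1) (s 2) := hdisj 1 2 (by norm_num)
  have d123 : Disjoint (s 1 ∪ s 2) (s 3) :=
    Finset.disjoint_union_left.mpr ⟨hdisj 1 3 (by norm_num), hdisj 2 3 (by norm_num)⟩
  have d1234 : Disjoint (s 1 ∪ s 2 ∪ s 3) (s 4) :=
    Finset.disjoint_union_left.mpr ⟨Finset.disjoint_union_left.mpr
      ⟨hdisj 1 4 (by norm_num), hdisj 2 4 (by norm_num)⟩, hdisj 3 4 (by norm_num)⟩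
  have d12346 : Disjoint (s 1 ∪ s 2 ∪ s 3 ∪ s 4) (s 6) :=
    Finset.disjoint_union_left.mpr ⟨Finset.disjoint_union_left.mpr
      ⟨Finset.disjoint_union_left.mpr ⟨hdisj 1 6 (by norm_num), hdisj 2 6 (by norm_num)⟩,
        hdisj 3 6 (by norm_num)⟩, hdisj 4 6 (by norm_num)⟩
  have hunion : s 1 ∪ s 2 ∪ s 3 ∪ s 4 ∪ s 6 = univ := by
    apply Finset.eq_univ_of_card
    rw [Finset.card_union_of_disjoint d12346, Finset.card_union_of_disjoint d1234,
      Finset.card_union_of_disjoint d123, Finset.card_union_of_disjoint d12,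
      c1, c2, c3, c4, c6]
    simp
  have hval : ∀ k : ℕ, (∑ y ∈ s k, Phi (nn G y)) = (s k).card * Phi k := by
    intro k
    rw [Finset.sum_congr rfl fun y hy => by
      rw [(Finset.mem_filter.mp hy).2]]
    rw [Finset.sum_const, nsmul_eq_mul]
  rw [← hunion, Finset.sum_union d12346, Finset.sum_union d1234, Finset.sum_union d123,
    Finset.sum_union d12, hval 1, hval 2, hval 3, hval 4, hval 6,
    c1, c2, c3, c4, c6]
  push_cast
  ring

end Helpers

lemma lower_num : (42162/10000 : ℝ) < 2 * Phi 1 + 9 * Phi 2 + 2 * Phi 3 + 5 * Phi 4 + 3 * Phi 6 := by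
  have la1 : (12647:ℝ)/2108 < Real.logb 2 ((1422080:ℝ)/22227) :=
    logb_lb _ _ _ _ (by norm_num) (by norm_num) (by exact_mod_cast (show (2:ℕ)^12647 * 22227^2108 < 1422080^2108 by decide +kernel))
  have la2 : (20524:ℝ)/4105 < Real.logb 2 ((6399360:ℝ)/200011) :=
    logb_lb _ _ _ _ (by norm_num) (by norm_num) (by exact_mod_cast (show (2:ℕ)^20524 * 200011^4105 < 6399360^4105 by decide +kernel))
  have la3 : (2256:ℝ)/511 < Real.logb 2 ((12798720:ℝ)/600001) :=
    logb_lb _ _ _ _ (by norm_num) (by norm_num) (by exact_mod_cast (show (2:ℕ)^2256 * 600001^511 < 12798720^511 by decide +kernel))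
  have la4 : (31199:ℝ)/7800 < Real.logb 2 ((213312:ℝ)/13333) :=
    logb_lb _ _ _ _ (by norm_num) (by norm_num) (by exact_mod_cast (show (2:ℕ)^31199 * 13333^7800 < 213312^7800 by decide +kernel))
  have la6 : (502:ℝ)/147 < Real.logb 2 ((6399360:ℝ)/599969) :=
    logb_lb _ _ _ _ (by norm_num) (by norm_num) (by exact_mod_cast (show (2:ℕ)^502 * 599969^147 < 6399360^147 by decide +kernel))
  have lb1 : -(209:ℝ)/18 < Real.logb 2 ((64:ℝ)/200043) :=
    logb_lb_neg _ _ _ _ (by norm_num) (by norm_num) (by norm_num) (by norm_num)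
  have lb2 : -(227:ℝ)/18 < Real.logb 2 ((32:ℝ)/200011) :=
    logb_lb_neg _ _ _ _ (by norm_num) (by norm_num) (by norm_num) (by norm_num)
  have lb3 : -(541:ℝ)/41 < Real.logb 2 ((64:ℝ)/600001) :=
    logb_lb_neg _ _ _ _ (by norm_num) (by norm_num) (by norm_num) (by exact_mod_cast (show (600001:ℕ)^41 < 2^541 * 64^41 by decide +kernel))
  have lb4 : -(245:ℝ)/18 < Real.logb 2 ((16:ℝ)/199995) :=
    logb_lb_neg _ _ _ _ (by norm_num) (by norm_num) (by norm_num) (by norm_num)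
  have lb6 : -(582:ℝ)/41 < Real.logb 2 ((32:ℝ)/599969) :=
    logb_lb_neg _ _ _ _ (by norm_num) (by norm_num) (by norm_num) (by exact_mod_cast (show (599969:ℕ)^41 < 2^582 * 32^41 by decide +kernel))
  have e1 : Phi 1 = 9999/640000 * Real.logb 2 ((1422080:ℝ)/22227)
      + 63/12800000 * Real.logb 2 ((64:ℝ)/200043) := by
    unfold Phi
    norm_num
  have e2 : Phi 2 = 9999/320000 * Real.logb 2 ((6399360:ℝ)/200011)
      + 62/12800000 * Real.logb 2 ((32:ℝ)/200011) := by
    unfold Phi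
    norm_num
  have e3 : Phi 3 = 29997/640000 * Real.logb 2 ((12798720:ℝ)/600001)
      + 61/12800000 * Real.logb 2 ((64:ℝ)/600001) := by
    unfold Phi
    norm_num
  have e4 : Phi 4 = 9999/160000 * Real.logb 2 ((213312:ℝ)/13333)
      + 60/12800000 * Real.logb 2 ((16:ℝ)/199995) := by
    unfold Phi
    norm_num
  have e6 : Phi 6 = 29997/320000 * Real.logb 2 ((6399360:ℝ)/599969)
      + 58/12800000 * Real.logb 2 ((32:ℝ)/599969) := by
    unfold Phi
    norm_num
  rw [e1, e2, e3, e4, e6]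
  linarith [la1, la2, la3, la4, la6, lb1, lb2, lb3, lb4, lb6]

lemma MI_le (G : Fin 64 → Fin 21) (q : Fin 64 → ℝ) (hq : IsDist q) :
    mutualInfo G (1/10000) q ≤ Real.logb 2 21 := by
  obtain ⟨hq0, hq1⟩ := hq
  have hrib_pos : ∀ (y : Fin 21) (x : Fin 64), (0:ℝ) < rib G (1/10000) y x := by
    intro y x; unfold rib; split_ifs <;> norm_num
  have hrib_le : ∀ (y : Fin 21) (x : Fin 64), rib G (1/10000) y x ≤ 1 := by
    intro y x; unfold rib; split_ifs <;> norm_num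
  have hrib_ge : ∀ (y : Fin 21) (x : Fin 64), (1/200000 : ℝ) ≤ rib G (1/10000) y x := by
    intro y x; unfold rib; split_ifs <;> norm_num
  set Q : Fin 21 → ℝ := fun y => ∑ x' : Fin 64, q x' * rib G (1/10000) y x' with hQdef
  have hQpos : ∀ y, 0 < Q y := by
    intro y
    have h1 : (1/200000:ℝ) = ∑ x' : Fin 64, q x' * (1/200000) := by
      rw [← Finset.sum_mul, hq1, one_mul]
    have h2 : ∑ x' : Fin 64, q x' * (1/200000) ≤ Q y :=
      Finset.sum_le_sum fun x _ => mul_le_mul_of_nonneg_left (hrib_ge y x) (hq0 x)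
    calc (0:ℝ) < 1/200000 := by norm_num
    _ ≤ Q y := h1 ▸ h2
  have hQsum : ∑ y, Q y = 1 := by
    rw [hQdef, Finset.sum_comm]
    have hx : ∀ x : Fin 64, ∑ y : Fin 21, q x * rib G (1/10000) y x = q x := by
      intro x
      rw [← Finset.mul_sum]
      have hy : ∑ y : Fin 21, rib G (1/10000) y x = 1 := by
        unfold rib
        rw [sum_ite_card (fun y : Fin 21 => y = G x)]
        have hfe : (univ.filter fun y : Fin 21 => y = G x) = {G x} := by
          ext z; simp
        rw [hfe]
        simp only [Finset.card_singleton, Fintype.card_fin]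
        norm_num
      rw [hy, mul_one]
    rw [Finset.sum_congr rfl fun x _ => hx x, hq1]
  have decomp : mutualInfo G (1/10000) q
      = (∑ x : Fin 64, ∑ y : Fin 21,
          q x * rib G (1/10000) y x * Real.logb 2 (rib G (1/10000) y x))
        - ∑ y : Fin 21, Q y * Real.logb 2 (Q y) := by
    unfold mutualInfo
    have hterm : ∀ (x : Fin 64) (y : Fin 21),
        q x * rib G (1/10000) y x * Real.logb 2 (rib G (1/10000) y x / Q y)
        = q x * rib G (1/10000) y x * Real.logb 2 (rib G (1/10000) y x)
          - q x * rib G (1/10000) y x * Real.logb 2 (Q y) := by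
      intro x y
      rw [Real.logb_div (hrib_pos y x).ne' (hQpos y).ne']
      ring
    calc (∑ x : Fin 64, ∑ y : Fin 21,
          q x * rib G (1/10000) y x * Real.logb 2 (rib G (1/10000) y x / Q y))
        = ∑ x : Fin 64, ∑ y : Fin 21,
          (q x * rib G (1/10000) y x * Real.logb 2 (rib G (1/10000) y x)
            - q x * rib G (1/10000) y x * Real.logb 2 (Q y)) :=
          Finset.sum_congr rfl fun x _ => Finset.sum_congr rfl fun y _ => hterm x y
      _ = (∑ x : Fin 64, ∑ y : Fin 21,
            q x * rib G (1/10000) y x * Real.logb 2 (rib G (1/10000) y x))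
          - ∑ x : Fin 64, ∑ y : Fin 21, q x * rib G (1/10000) y x * Real.logb 2 (Q y) := by
          rw [← Finset.sum_sub_distrib]
          exact Finset.sum_congr rfl fun x _ => by rw [← Finset.sum_sub_distrib]
      _ = (∑ x : Fin 64, ∑ y : Fin 21,
            q x * rib G (1/10000) y x * Real.logb 2 (rib G (1/10000) y x))
          - ∑ y : Fin 21, Q y * Real.logb 2 (Q y) := by
          congr 1
          rw [Finset.sum_comm]
          exact Finset.sum_congr rfl fun y _ => (Finset.sum_mul _ _ _).symm
  have hA : (∑ x : Fin 64, ∑ y : Fin 21,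
      q x * rib G (1/10000) y x * Real.logb 2 (rib G (1/10000) y x)) ≤ 0 :=
    Finset.sum_nonpos fun x _ => Finset.sum_nonpos fun y _ =>
      mul_nonpos_of_nonneg_of_nonpos (mul_nonneg (hq0 x) (hrib_pos y x).le)
        (Real.logb_nonpos one_lt_two (hrib_pos y x).le (hrib_le y x))
  have hB : -(∑ y : Fin 21, Q y * Real.logb 2 (Q y)) ≤ Real.logb 2 21 := by
    have hl2 : (0:ℝ) < Real.log 2 := Real.log_pos one_lt_two
    have key : ∀ y : Fin 21, (Q y - 1/21) / Real.log 2 ≤ Q y * Real.logb 2 (21 * Q y) := by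
      intro y
      have h21 : (0:ℝ) < 21 * Q y := by have := hQpos y; linarith
      have hlog := Real.one_sub_inv_le_log_of_pos h21
      have hmain : Q y - 1/21 ≤ Q y * Real.log (21 * Q y) := by
        have hmul := mul_le_mul_of_nonneg_left hlog (hQpos y).le
        have heq : Q y * (1 - (21 * Q y)⁻¹) = Q y - 1/21 := by
          have hne : Q y ≠ 0 := (hQpos y).ne'
          rw [mul_sub, mul_one, mul_inv, ← mul_assoc, mul_comm (Q y), mul_assoc, mul_inv_cancel₀ hne]
          norm_num
        linarith [heq ▸ hmul]
      have : (Q y - 1/21) / Real.log 2 ≤ (Q y * Real.log (21 * Q y)) / Real.log 2 := by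
        gcongr
      calc (Q y - 1/21) / Real.log 2 ≤ (Q y * Real.log (21 * Q y)) / Real.log 2 := this
      _ = Q y * Real.logb 2 (21 * Q y) := by rw [Real.logb]; ring
    have sum0 : (0:ℝ) ≤ ∑ y : Fin 21, Q y * Real.logb 2 (21 * Q y) := by
      have hz : ∑ y : Fin 21, (Q y - 1/21) / Real.log 2 = 0 := by
        rw [← Finset.sum_div, Finset.sum_sub_distrib, hQsum]
        norm_num
      calc (0:ℝ) = ∑ y : Fin 21, (Q y - 1/21) / Real.log 2 := hz.symm
      _ ≤ _ := Finset.sum_le_sum fun y _ => key y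
    have expand : ∑ y : Fin 21, Q y * Real.logb 2 (21 * Q y)
        = Real.logb 2 21 + ∑ y : Fin 21, Q y * Real.logb 2 (Q y) := by
      have ht : ∀ y : Fin 21, Q y * Real.logb 2 (21 * Q y)
          = Q y * Real.logb 2 21 + Q y * Real.logb 2 (Q y) := fun y => by
        rw [Real.logb_mul (by norm_num) (hQpos y).ne']; ring
      rw [Finset.sum_congr rfl fun y _ => ht y, Finset.sum_add_distrib, ← Finset.sum_mul,
        hQsum, one_mul]
    linarith [sum0, expand]
  linarith [decomp.le, decomp.ge, hA, hB]

/-- At the typical error probability `r = 10⁻⁴`: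
`4.216 < C(10⁻⁴) ≤ log₂ 21 < 4.3924` bits per use; equivalently, dividing by the
6 bits per codon, `0.7027 < C(10⁻⁴)/6 < 0.7321` codons per use. -/
theorem ribosome_capacity_at_typical_error (G : Fin 64 → Fin 21) (hG : FiberCode G) :
    ((4.216 : ℝ) < capacity G (1 / 10000) ∧
        capacity G (1 / 10000) ≤ Real.logb 2 21 ∧
        Real.logb 2 21 < (4.3924 : ℝ)) ∧
      ((0.7027 : ℝ) < capacity G (1 / 10000) / 6 ∧
        capacity G (1 / 10000) / 6 < (0.7321 : ℝ)) := by
  have hlow : (42162/10000:ℝ) < mutualInfo G (1/10000) (fun _ => 1/64) := by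
    rw [uniform_eval G hG]; exact lower_num
  have hdist : IsDist (fun _ : Fin 64 => (1/64:ℝ)) := by
    constructor
    · intro x; norm_num
    · simp [Finset.sum_const]
  have hmem : mutualInfo G (1/10000) (fun _ => 1/64)
      ∈ {c : ℝ | ∃ q : Fin 64 → ℝ, IsDist q ∧ c = mutualInfo G (1/10000) q} :=
    ⟨fun _ => 1/64, hdist, rfl⟩
  have hub : ∀ c ∈ {c : ℝ | ∃ q : Fin 64 → ℝ, IsDist q ∧ c = mutualInfo G (1/10000) q},
      c ≤ Real.logb 2 21 := by
    rintro c ⟨q, hq, rfl⟩; exact MI_le G q hq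
  have hcapdef : capacity G (1/10000)
      = sSup {c : ℝ | ∃ q : Fin 64 → ℝ, IsDist q ∧ c = mutualInfo G (1/10000) q} := rfl
  have hcap_ge : mutualInfo G (1/10000) (fun _ => 1/64) ≤ capacity G (1/10000) := by
    rw [hcapdef]; exact le_csSup ⟨Real.logb 2 21, hub⟩ hmem
  have hcap_le : capacity G (1/10000) ≤ Real.logb 2 21 := by
    rw [hcapdef]
    exact Real.sSup_le hub (Real.logb_nonneg one_lt_two (by norm_num))
  have h21 : Real.logb 2 21 < (43924/10000 : ℝ) := by
    have h := logb_ub 21 918 209 (by norm_num) (by norm_num) (by exact_mod_cast (show (21:ℕ)^209 < 2^918 by decide +kernel))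
    have : (918:ℝ)/209 < 43924/10000 := by norm_num
    linarith
  have h5 : (42162/10000:ℝ) < capacity G (1/10000) := lt_of_lt_of_le hlow hcap_ge
  norm_num
  refine ⟨⟨by linarith, hcap_le, by linarith⟩, by linarith, by linarith⟩
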